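/- Let d ≥ 1, let r = (r_1,…,r_d) with r_j > 0, set g(r) = (d⁻¹ Σ_{j=1}^d 1/r_j)⁻¹ and a_j = 2^{g(r)/r_j}. For an integer n ≥ 1 define F_n : ℝ^d → ℝ by F_n(x) = ∏_{j=1}^d √(2/π)·sin(a_j^n x_j)/x_j − ∏_{j=1}^d √(2/π)·sin(a_j^{n−1} x_j)/x_j, where sin(σ·x)/x is interpreted as σ when x = 0. Let 1 < p < ∞ and 1/p + 1/p' = 1. Then F_n ∈ L_p(ℝ^d), and there exist constants c, C > 0 depending only on d and p such that for all integers n ≥ 1: c·2^{dn/p'} ≤ ‖F_n‖_{L_p(ℝ^d)} ≤ C·2^{dn/p'}. -/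

import Mathlib

open MeasureTheory Real Filter Topology

/-- `g(r) = (d⁻¹ ∑ 1/r_j)⁻¹`. -/
noncomputable def gOf (d : ℕ) (r : Fin d → ℝ) : ℝ :=
  (((d : ℝ))⁻¹ * ∑ j, (r j)⁻¹)⁻¹

/-- `a_j = 2^{g(r)/r_j}`. -/
noncomputable def aOf (d : ℕ) (r : Fin d → ℝ) (j : Fin d) : ℝ :=
  (2 : ℝ) ^ (gOf d r / r j)

/-- `sin(σx)/x`, interpreted as `σ` at `x = 0`. -/
noncomputable def sinK (σ x : ℝ) : ℝ :=
  if x = 0 then σ else Real.sin (σ * x) / x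

/-- `F_n(x) = ∏_j √(2/π) sin(a_j^n x_j)/x_j − ∏_j √(2/π) sin(a_j^{n-1} x_j)/x_j`. -/
noncomputable def Fn (d : ℕ) (r : Fin d → ℝ) (n : ℕ) : (Fin d → ℝ) → ℝ :=
  fun x =>
    (∏ j, Real.sqrt (2 / Real.pi) * sinK (aOf d r j ^ n) (x j)) -
    (∏ j, Real.sqrt (2 / Real.pi) * sinK (aOf d r j ^ (n - 1)) (x j))

lemma continuous_sinK (σ : ℝ) : Continuous (sinK σ) := by
  rw [continuous_iff_continuousAt]
  intro x
  rcases eq_or_ne x 0 with rfl | hx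
  · have hder : HasDerivAt (fun y : ℝ => Real.sin (σ * y)) σ 0 := by
      have h1 : HasDerivAt (fun y : ℝ => σ * y) σ 0 := by
        simpa using (hasDerivAt_id (0:ℝ)).const_mul σ
      have h2 := (Real.hasDerivAt_sin (σ * 0)).comp 0 h1
      simpa [Function.comp_def] using h2
    have hslope : Tendsto (slope (fun y => Real.sin (σ * y)) 0) (𝓝[≠] 0) (𝓝 σ) :=
      hasDerivAt_iff_tendsto_slope.mp hder
    have htend : Tendsto (sinK σ) (𝓝[≠] 0) (𝓝 σ) := by
      refine hslope.congr' ?_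
      filter_upwards [self_mem_nhdsWithin] with y hy
      simp only [Set.mem_compl_iff, Set.mem_singleton_iff] at hy
      simp [slope_def_field, sinK, hy]
    have hT : Tendsto (sinK σ) (𝓝 0) (𝓝 σ) := by
      rw [← nhdsNE_sup_pure (0:ℝ), tendsto_sup]
      refine ⟨htend, ?_⟩
      have : sinK σ 0 = σ := by simp [sinK]
      simpa [this] using (tendsto_pure_nhds (sinK σ) 0)
    have h0 : sinK σ 0 = σ := by simp [sinK]
    simpa [ContinuousAt, h0] using hT
  · have hev : (fun y => Real.sin (σ * y) / y) =ᶠ[𝓝 x] sinK σ := by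
      filter_upwards [isOpen_ne.mem_nhds hx] with y hy
      simp [sinK, hy]
    exact ContinuousAt.congr
      (((Real.continuous_sin.comp (continuous_const.mul continuous_id)).continuousAt).div
        continuousAt_id hx) hev


lemma abs_sinK_one_le_one (x : ℝ) : |sinK 1 x| ≤ 1 := by
  rcases eq_or_ne x 0 with rfl | hx
  · simp [sinK]
  · simp only [sinK, hx, if_false, one_mul]
    rw [abs_div]
    rw [div_le_one (abs_pos.mpr hx)]
    exact Real.abs_sin_le_abs

lemma abs_sinK_one_le (x : ℝ) : |sinK 1 x| ≤ 2 / (1 + |x|) := by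
  rcases le_or_gt (|x|) 1 with h | h
  · calc |sinK 1 x| ≤ 1 := abs_sinK_one_le_one x
      _ ≤ 2 / (1 + |x|) := by
        rw [le_div_iff₀ (by positivity)]
        nlinarith
  · have hx : x ≠ 0 := by intro h0; rw [h0] at h; simp at h; linarith
    have : |sinK 1 x| ≤ 1 / |x| := by
      simp only [sinK, hx, if_false, one_mul]
      rw [abs_div, div_le_div_iff₀ (abs_pos.mpr hx) (abs_pos.mpr hx)]
      nlinarith [Real.abs_sin_le_one x, abs_pos.mpr hx]
    calc |sinK 1 x| ≤ 1 / |x| := this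
      _ ≤ 2 / (1 + |x|) := by
        rw [div_le_div_iff₀ (by positivity) (by positivity)]
        nlinarith

lemma integrable_rpow_sinK_one {p : ℝ} (hp : 1 < p) :
    Integrable (fun x : ℝ => ‖sinK 1 x‖ ^ p) := by
  have hp0 : (0:ℝ) < p := by linarith
  have hint : Integrable (fun x : ℝ => (2:ℝ)^p * (1 + ‖x‖) ^ (-p)) := by
    refine Integrable.const_mul ?_ _
    exact integrable_one_add_norm (by simpa using hp)
  refine hint.mono' ?_ ?_
  · refine Continuous.aestronglyMeasurable ?_
    exact ((continuous_sinK 1).norm).rpow_const (fun x => Or.inr hp0.le)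
  · refine Filter.Eventually.of_forall (fun x => ?_)
    have h1 : (0:ℝ) < 1 + ‖x‖ := by positivity
    have hb : ‖sinK 1 x‖ ≤ 2 / (1 + ‖x‖) := by
      simpa [Real.norm_eq_abs] using abs_sinK_one_le x
    have h2 : ‖sinK 1 x‖ ^ p ≤ (2 / (1 + ‖x‖)) ^ p :=
      Real.rpow_le_rpow (norm_nonneg _) hb hp0.le
    have h3 : (2 / (1 + ‖x‖)) ^ p = (2:ℝ)^p * (1 + ‖x‖) ^ (-p) := by
      rw [Real.div_rpow (by norm_num) h1.le, Real.rpow_neg h1.le, div_eq_mul_inv]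
    rw [Real.norm_eq_abs, abs_of_nonneg (Real.rpow_nonneg (norm_nonneg _) _)]
    rw [← h3]; exact h2

lemma memLp_of_integrable_rpow {α : Type*} [MeasurableSpace α] {μ : Measure α} {f : α → ℝ}
    {p : ℝ} (hp : 1 < p) (hf : AEStronglyMeasurable f μ)
    (hint : Integrable (fun x => ‖f x‖ ^ p) μ) :
    MemLp f (ENNReal.ofReal p) μ := by
  have hp0 : (0:ℝ) < p := by linarith
  have hP0 : ENNReal.ofReal p ≠ 0 := by
    simp only [ne_eq, ENNReal.ofReal_eq_zero, not_le]; linarith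
  have hPt : ENNReal.ofReal p ≠ ⊤ := ENNReal.ofReal_ne_top
  refine (memLp_norm_rpow_iff (q := ENNReal.ofReal p) hf hP0 hPt).mp ?_
  rw [ENNReal.div_self hP0 hPt, memLp_one_iff_integrable]
  simpa [ENNReal.toReal_ofReal hp0.le] using hint

lemma integral_rpow_sinK_one_pos {p : ℝ} (hp : 1 < p) :
    0 < ∫ x : ℝ, ‖sinK 1 x‖ ^ p := by
  have hp0 : (0:ℝ) < p := by linarith
  rw [integral_pos_iff_support_of_nonneg (fun x => Real.rpow_nonneg (norm_nonneg _) _)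
    (integrable_rpow_sinK_one hp)]
  have hU : IsOpen ((sinK 1) ⁻¹' (Set.Ioi (1/2 : ℝ))) :=
    (continuous_sinK 1).isOpen_preimage _ isOpen_Ioi
  have h0 : (0:ℝ) ∈ (sinK 1) ⁻¹' (Set.Ioi (1/2 : ℝ)) := by
    simp [sinK]; norm_num
  have hpos := hU.measure_pos volume ⟨0, h0⟩
  refine lt_of_lt_of_le hpos (measure_mono ?_)
  intro x hx
  simp only [Set.mem_preimage, Set.mem_Ioi] at hx
  have : (0:ℝ) < ‖sinK 1 x‖ ^ p :=
    Real.rpow_pos_of_pos (by rw [Real.norm_eq_abs]; exact lt_of_le_of_lt (by norm_num) (lt_of_lt_of_le hx (le_abs_self _))) _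
  exact fun h => this.ne' h

lemma sinK_eq_smul (σ x : ℝ) : sinK σ x = σ * sinK 1 (σ * x) := by
  rcases eq_or_ne x 0 with rfl | hx
  · simp [sinK]
  rcases eq_or_ne σ 0 with rfl | hσ
  · simp [sinK, hx]
  have hσx : σ * x ≠ 0 := mul_ne_zero hσ hx
  simp only [sinK, hx, hσx, if_false, one_mul]
  field_simp

lemma norm_rpow_sinK_eq {p : ℝ} (σ x : ℝ) (hσ : 0 < σ) :
    ‖sinK σ x‖ ^ p = σ ^ p * ‖sinK 1 (σ * x)‖ ^ p := by
  rw [sinK_eq_smul, Real.norm_eq_abs, abs_mul, Real.mul_rpow (abs_nonneg _) (abs_nonneg _),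
    abs_of_pos hσ, Real.norm_eq_abs]

lemma integrable_rpow_sinK {p : ℝ} (hp : 1 < p) {σ : ℝ} (hσ : 0 < σ) :
    Integrable (fun x : ℝ => ‖sinK σ x‖ ^ p) := by
  have h2 : Integrable (fun x : ℝ => ‖sinK 1 (σ * x)‖ ^ p) := by
    refine (integrable_comp_mul_left_iff (fun y : ℝ => ‖sinK 1 y‖ ^ p) hσ.ne').mpr ?_
    exact integrable_rpow_sinK_one hp
  have h3 := h2.const_mul (σ ^ p)
  refine h3.congr ?_
  exact Filter.Eventually.of_forall (fun x => (norm_rpow_sinK_eq σ x hσ).symm)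

lemma integral_rpow_sinK {p : ℝ} (hp : 1 < p) {σ : ℝ} (hσ : 0 < σ) :
    ∫ x : ℝ, ‖sinK σ x‖ ^ p = σ ^ (p - 1) * ∫ x : ℝ, ‖sinK 1 x‖ ^ p := by
  have h1 : ∀ x : ℝ, ‖sinK σ x‖ ^ p = σ ^ p * ‖sinK 1 (σ * x)‖ ^ p :=
    fun x => norm_rpow_sinK_eq σ x hσ
  calc ∫ x : ℝ, ‖sinK σ x‖ ^ p = ∫ x : ℝ, σ ^ p * ‖sinK 1 (σ * x)‖ ^ p := by simp_rw [h1]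
    _ = σ ^ p * ∫ x : ℝ, ‖sinK 1 (σ * x)‖ ^ p := integral_const_mul _ _
    _ = σ ^ p * (|σ⁻¹| • ∫ x : ℝ, ‖sinK 1 x‖ ^ p) := by
        rw [MeasureTheory.Measure.integral_comp_mul_left (fun y : ℝ => ‖sinK 1 y‖ ^ p) σ]
    _ = σ ^ (p - 1) * ∫ x : ℝ, ‖sinK 1 x‖ ^ p := by
        rw [abs_of_pos (inv_pos.mpr hσ), smul_eq_mul, ← mul_assoc]
        congr 1
        rw [Real.rpow_sub hσ, Real.rpow_one, div_eq_mul_inv]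

lemma memLp_sinK {p : ℝ} (hp : 1 < p) {σ : ℝ} (hσ : 0 < σ) :
    MemLp (sinK σ) (ENNReal.ofReal p) volume :=
  memLp_of_integrable_rpow hp (continuous_sinK σ).aestronglyMeasurable
    (integrable_rpow_sinK hp hσ)
lemma prod_memLp_integral {d : ℕ} {p : ℝ} (hp : 1 < p) (f : Fin d → ℝ → ℝ)
    (hc : ∀ j, Continuous (f j)) (hm : ∀ j, MemLp (f j) (ENNReal.ofReal p) volume) :
    MemLp (fun x : Fin d → ℝ => ∏ j, f j (x j)) (ENNReal.ofReal p) volume ∧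
    ∫ x : Fin d → ℝ, ‖∏ j, f j (x j)‖ ^ p = ∏ j, ∫ y : ℝ, ‖f j y‖ ^ p := by
  have hp0 : (0:ℝ) < p := by linarith
  have hcont : Continuous (fun x : Fin d → ℝ => ∏ j, f j (x j)) :=
    continuous_finset_prod _ (fun j _ => (hc j).comp (continuous_apply j))
  have hkey : ∀ x : Fin d → ℝ, ‖∏ j, f j (x j)‖ ^ p = ∏ j, ‖f j (x j)‖ ^ p := by
    intro x
    rw [show ‖∏ j, f j (x j)‖ = ∏ j, ‖f j (x j)‖ from norm_prod _ _]
    exact (Real.finset_prod_rpow Finset.univ (fun j => ‖f j (x j)‖) (fun j _ => norm_nonneg _) p).symm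
  have hint : ∀ j, Integrable (fun y : ℝ => ‖f j y‖ ^ p) := by
    intro j
    have h := (hm j).integrable_norm_rpow
      (by simp only [ne_eq, ENNReal.ofReal_eq_zero, not_le]; linarith) ENNReal.ofReal_ne_top
    simpa [ENNReal.toReal_ofReal hp0.le] using h
  have hprodint : Integrable (fun x : Fin d → ℝ => ∏ j, ‖f j (x j)‖ ^ p) :=
    Integrable.fin_nat_prod (fun j => hint j)
  constructor
  · refine memLp_of_integrable_rpow hp hcont.aestronglyMeasurable ?_
    refine hprodint.congr (Filter.Eventually.of_forall (fun x => ?_))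
    exact (hkey x).symm
  · calc ∫ x : Fin d → ℝ, ‖∏ j, f j (x j)‖ ^ p
        = ∫ x : Fin d → ℝ, ∏ j, ‖f j (x j)‖ ^ p := by simp_rw [hkey]
      _ = ∏ j, ∫ y : ℝ, ‖f j y‖ ^ p := MeasureTheory.integral_fin_nat_prod_eq_prod (fun j (y : ℝ) => ‖f j y‖ ^ p)
noncomputable def Gm (d : ℕ) (r : Fin d → ℝ) (m : ℕ) : (Fin d → ℝ) → ℝ :=
  fun x => ∏ j, Real.sqrt (2 / Real.pi) * sinK (aOf d r j ^ m) (x j)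

lemma Fn_eq_sub (d : ℕ) (r : Fin d → ℝ) (n : ℕ) :
    Fn d r n = fun x => Gm d r n x - Gm d r (n - 1) x := rfl

/-- Order relation `‖F_n‖_{L_p(ℝ^d)} ≍ 2^{dn/p'}` for `1 < p < ∞`, `1/p + 1/p' = 1`. -/
theorem Fn_lp_order
    (d : ℕ) (hd : 1 ≤ d) (r : Fin d → ℝ) (hr : ∀ j, 0 < r j)
    (p p' : ℝ) (hp1 : 1 < p) (hconj : 1 / p + 1 / p' = 1) :
    ∃ c C : ℝ, 0 < c ∧ 0 < C ∧
      ∀ n : ℕ, 1 ≤ n →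
        MemLp (Fn d r n) (ENNReal.ofReal p) volume ∧
        ENNReal.ofReal (c * (2 : ℝ) ^ (((d : ℝ) * n) / p')) ≤
          eLpNorm (Fn d r n) (ENNReal.ofReal p) volume ∧
        eLpNorm (Fn d r n) (ENNReal.ofReal p) volume ≤
          ENNReal.ofReal (C * (2 : ℝ) ^ (((d : ℝ) * n) / p')) := by
  have hp0 : (0:ℝ) < p := by linarith
  have hP0 : ENNReal.ofReal p ≠ 0 := by
    simp only [ne_eq, ENNReal.ofReal_eq_zero, not_le]; linarith
  have hPt : ENNReal.ofReal p ≠ ⊤ := ENNReal.ofReal_ne_top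
  have hP1 : (1 : ENNReal) ≤ ENNReal.ofReal p := by
    rw [← ENNReal.ofReal_one]; exact ENNReal.ofReal_le_ofReal hp1.le
  have hPto : (ENNReal.ofReal p).toReal = p := ENNReal.toReal_ofReal hp0.le
  have hp'pos : (0:ℝ) < p' := by
    have h1 : 1/p < 1 := by rw [div_lt_one hp0]; exact hp1
    have h2 : 0 < 1/p' := by linarith
    exact one_div_pos.mp h2
  have hkey : (p - 1) * p⁻¹ = 1/p' := by
    have h : 1/p' = 1 - 1/p := by linarith
    rw [h]; field_simp
  -- geometry of a_j
  have hd0 : (0:ℝ) < d := by exact_mod_cast hd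
  have hS : (0:ℝ) < ∑ j, (r j)⁻¹ := by
    have : Nonempty (Fin d) := Fin.pos_iff_nonempty.mp hd
    exact Finset.sum_pos (fun j _ => inv_pos.mpr (hr j)) Finset.univ_nonempty
  have haj : ∀ j, 0 < aOf d r j := fun j => Real.rpow_pos_of_pos two_pos _
  have hgsum : (∑ j, gOf d r / r j) = (d:ℝ) := by
    simp_rw [div_eq_mul_inv]
    rw [← Finset.mul_sum, gOf, mul_inv, inv_inv, mul_assoc, inv_mul_cancel₀ hS.ne', mul_one]
  have haprod : ∏ j, aOf d r j = (2:ℝ) ^ (d:ℝ) := by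
    have h1 : ∀ j : Fin d, aOf d r j = Real.exp (Real.log 2 * (gOf d r / r j)) := fun j => by
      rw [aOf, Real.rpow_def_of_pos two_pos]
    simp_rw [h1, ← Real.exp_sum, Real.rpow_def_of_pos two_pos, ← Finset.mul_sum, hgsum]
  have hprodpow : ∀ m : ℕ, ∏ j, aOf d r j ^ m = (2:ℝ) ^ ((d:ℝ) * m) := by
    intro m
    rw [Finset.prod_pow, haprod, ← Real.rpow_natCast ((2:ℝ) ^ (d:ℝ)) m,
      ← Real.rpow_mul (by norm_num)]
  -- constants
  set c0 : ℝ := Real.sqrt (2 / Real.pi) with hc0def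
  have hc0 : 0 < c0 := Real.sqrt_pos.mpr (by positivity)
  set I1 : ℝ := ∫ x : ℝ, ‖sinK 1 x‖ ^ p with hI1def
  have hI1 : 0 < I1 := integral_rpow_sinK_one_pos hp1
  set A : ℝ := c0 ^ p * I1 with hAdef
  have hA : 0 < A := mul_pos (Real.rpow_pos_of_pos hc0 p) hI1
  set K1 : ℝ := (A ^ d) ^ p⁻¹ with hK1def
  have hK1 : 0 < K1 := Real.rpow_pos_of_pos (pow_pos hA d) _
  -- Gm facts
  have hGm : ∀ m : ℕ, MemLp (Gm d r m) (ENNReal.ofReal p) volume ∧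
      eLpNorm (Gm d r m) (ENNReal.ofReal p) volume
        = ENNReal.ofReal (K1 * (2:ℝ) ^ (((d:ℝ) * m) / p')) := by
    intro m
    have hσ : ∀ j, 0 < aOf d r j ^ m := fun j => pow_pos (haj j) m
    obtain ⟨hmem, hint⟩ := prod_memLp_integral hp1
        (fun j => fun y => c0 * sinK (aOf d r j ^ m) y)
        (fun j => continuous_const.mul (continuous_sinK _))
        (fun j => (memLp_sinK hp1 (hσ j)).const_mul c0)
    have hGmem : MemLp (Gm d r m) (ENNReal.ofReal p) volume := hmem
    refine ⟨hGmem, ?_⟩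
    have hfac : ∀ j, (∫ y : ℝ, ‖c0 * sinK (aOf d r j ^ m) y‖ ^ p)
        = A * (aOf d r j ^ m) ^ (p - 1) := by
      intro j
      have h1 : ∀ y : ℝ, ‖c0 * sinK (aOf d r j ^ m) y‖ ^ p
          = c0 ^ p * ‖sinK (aOf d r j ^ m) y‖ ^ p := by
        intro y
        rw [Real.norm_eq_abs, abs_mul, Real.mul_rpow (abs_nonneg _) (abs_nonneg _),
          abs_of_pos hc0, Real.norm_eq_abs]
      calc (∫ y : ℝ, ‖c0 * sinK (aOf d r j ^ m) y‖ ^ p)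
          = ∫ y : ℝ, c0 ^ p * ‖sinK (aOf d r j ^ m) y‖ ^ p := by simp_rw [h1]
        _ = c0 ^ p * ∫ y : ℝ, ‖sinK (aOf d r j ^ m) y‖ ^ p := integral_const_mul _ _
        _ = c0 ^ p * ((aOf d r j ^ m) ^ (p - 1) * I1) := by
            rw [integral_rpow_sinK hp1 (hσ j)]
        _ = A * (aOf d r j ^ m) ^ (p - 1) := by rw [hAdef]; ring
    have hJ : (∫ x : Fin d → ℝ, ‖Gm d r m x‖ ^ p)
        = A ^ d * (2:ℝ) ^ ((d:ℝ) * m * (p - 1)) := by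
      have : (∫ x : Fin d → ℝ, ‖Gm d r m x‖ ^ p)
          = ∏ j, ∫ y : ℝ, ‖c0 * sinK (aOf d r j ^ m) y‖ ^ p := hint
      rw [this]
      simp_rw [hfac]
      rw [Finset.prod_mul_distrib, Finset.prod_const, Finset.card_univ, Fintype.card_fin]
      congr 1
      have hh := Real.finset_prod_rpow Finset.univ (fun j => aOf d r j ^ m)
        (fun j _ => (hσ j).le) (p - 1)
      rw [hh, hprodpow m, ← Real.rpow_mul (by norm_num)]
    rw [hGmem.eLpNorm_eq_integral_rpow_norm hP0 hPt]
    congr 1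
    rw [hPto, hJ, Real.mul_rpow (pow_nonneg hA.le d) (Real.rpow_nonneg (by norm_num) _),
      ← Real.rpow_mul (by norm_num : (0:ℝ) ≤ 2), ← hK1def]
    congr 1
    rw [mul_assoc, hkey]
    rw [mul_one_div, mul_div_assoc]
  -- final constants
  have hneg : (2:ℝ) ^ (-((d:ℝ)/p')) < 1 :=
    Real.rpow_lt_one_of_one_lt_of_neg one_lt_two (neg_lt_zero.mpr (div_pos hd0 hp'pos))
  have hcpos : 0 < K1 * (1 - (2:ℝ) ^ (-((d:ℝ)/p'))) :=
    mul_pos hK1 (by linarith)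
  refine ⟨K1 * (1 - (2:ℝ) ^ (-((d:ℝ)/p'))), 2 * K1, hcpos, by linarith, ?_⟩
  intro n hn
  have hcast : ((n - 1 : ℕ) : ℝ) = (n : ℝ) - 1 := by
    rw [Nat.cast_sub hn]; norm_num
  set t : ℝ := ((d:ℝ) * n) / p' with htdef
  have hsplit : ((d:ℝ) * ((n - 1 : ℕ) : ℝ)) / p' = t + (-((d:ℝ)/p')) := by
    rw [hcast, htdef]; field_simp; ring
  have hGn := hGm n
  have hGn1 := hGm (n - 1)
  have h2s : (2:ℝ) ^ (((d:ℝ) * ((n - 1 : ℕ) : ℝ)) / p')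
      = (2:ℝ) ^ t * (2:ℝ) ^ (-((d:ℝ)/p')) := by
    rw [hsplit, Real.rpow_add two_pos]
  have h2t : (0:ℝ) < (2:ℝ) ^ t := Real.rpow_pos_of_pos two_pos _
  have h2neg : (0:ℝ) < (2:ℝ) ^ (-((d:ℝ)/p')) := Real.rpow_pos_of_pos two_pos _
  have hmemF : MemLp (Fn d r n) (ENNReal.ofReal p) volume := by
    rw [Fn_eq_sub]
    exact (hGn.1).sub (hGn1.1)
  refine ⟨hmemF, ?_, ?_⟩
  · -- lower bound
    have hGeq : Gm d r n = fun x => Fn d r n x + Gm d r (n - 1) x := by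
      funext x
      rw [Fn_eq_sub]
      ring
    have hle : eLpNorm (Gm d r n) (ENNReal.ofReal p) volume
        ≤ eLpNorm (Fn d r n) (ENNReal.ofReal p) volume
          + eLpNorm (Gm d r (n - 1)) (ENNReal.ofReal p) volume := by
      rw [hGeq]
      exact eLpNorm_add_le hmemF.aestronglyMeasurable (hGn1.1).aestronglyMeasurable hP1
    rw [hGn.2, hGn1.2, h2s, ← htdef] at hle
    have hsum : ENNReal.ofReal (K1 * (1 - (2:ℝ) ^ (-((d:ℝ)/p'))) * (2:ℝ) ^ t)
          + ENNReal.ofReal (K1 * ((2:ℝ) ^ t * (2:ℝ) ^ (-((d:ℝ)/p'))))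
        = ENNReal.ofReal (K1 * (2:ℝ) ^ t) := by
      rw [← ENNReal.ofReal_add (mul_nonneg hcpos.le h2t.le) (by positivity)]
      congr 1
      ring
    rw [← hsum] at hle
    exact (ENNReal.add_le_add_iff_right (a := ENNReal.ofReal
        (K1 * ((2:ℝ) ^ t * (2:ℝ) ^ (-((d:ℝ)/p'))))) ENNReal.ofReal_ne_top).mp hle
  · -- upper bound
    have hle : eLpNorm (Fn d r n) (ENNReal.ofReal p) volume
        ≤ eLpNorm (Gm d r n) (ENNReal.ofReal p) volume
          + eLpNorm (Gm d r (n - 1)) (ENNReal.ofReal p) volume := by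
      rw [Fn_eq_sub]
      exact eLpNorm_sub_le (hGn.1).aestronglyMeasurable (hGn1.1).aestronglyMeasurable hP1
    rw [hGn.2, hGn1.2, h2s, ← htdef] at hle
    refine le_trans hle ?_
    rw [← ENNReal.ofReal_add (by positivity) (by positivity)]
    apply ENNReal.ofReal_le_ofReal
    have hmono : K1 * ((2:ℝ) ^ t * (2:ℝ) ^ (-((d:ℝ)/p'))) ≤ K1 * (2:ℝ) ^ t := by
      nlinarith [mul_pos hK1 h2t]
    linarith
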